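/- An entire function f of finite order solves the differential equation f‴(z) − (3 + e^z) f″(z) + (3 + 2e^z) f′(z) − (1 + e^z) f(z) = 0 if and only if there exist constants c_1, c_2 ∈ ℂ such that f(z) = (c_1 + c_2 z) e^{z} for all z ∈ ℂ. -/

import Mathlib

open Filter Polynomial

noncomputable def maxMod (f : ℂ → ℂ) (r : ℝ) : ℝ :=
  sSup ((fun z => ‖f z‖) '' Metric.sphere (0 : ℂ) r)

lemma maxMod_ge {f : ℂ → ℂ} (hf : Continuous f) {z : ℂ} :
    ‖f z‖ ≤ maxMod f (‖z‖) := by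
  apply le_csSup
  · exact ((isCompact_sphere (0:ℂ) _).image (continuous_norm.comp hf)).bddAbove
  · exact Set.mem_image_of_mem _ (by simp [Metric.mem_sphere, Complex.dist_eq])

lemma const_of_hasDerivAt_zero (u : ℂ → ℂ) (hu : ∀ z, HasDerivAt u 0 z) (z : ℂ) :
    u z = u 0 := by
  apply is_const_of_fderiv_eq_zero (𝕜 := ℂ) (fun w => (hu w).differentiableAt)
  intro w
  have := (hu w).hasFDerivAt
  rw [this.fderiv]
  ext v
  simp

lemma norm_le_maxMod {f : ℂ → ℂ} (hf : Differentiable ℂ f) {z : ℂ} {R : ℝ}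
    (hz : ‖z‖ ≤ R) : ‖f z‖ ≤ maxMod f R := by
  rcases eq_or_lt_of_le hz with h | h
  · rw [← h]; exact maxMod_ge hf.continuous
  · have hR : 0 < R := lt_of_le_of_lt (norm_nonneg z) h
    have key : ‖f z‖ ≤ maxMod f R := by
      apply Complex.norm_le_of_forall_mem_frontier_norm_le
        (Metric.isBounded_ball (x := (0:ℂ)) (r := R)) hf.diffContOnCl
      · intro w hw
        rw [frontier_ball (0:ℂ) hR.ne'] at hw
        have : ‖w‖ = R := by simpa [Complex.dist_eq] using hw
        rw [← this]
        exact maxMod_ge hf.continuous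
      · exact subset_closure (by simpa [Metric.mem_ball, Complex.dist_eq] using h)
    simpa using key

lemma maxMod_nonneg {f : ℂ → ℂ} (hf : Continuous f) {r : ℝ} (hr : 0 ≤ r) :
    0 ≤ maxMod f r := by
  have h1 : ‖f r‖ ≤ maxMod f (‖(r:ℂ)‖) := maxMod_ge hf
  rw [Complex.norm_real, Real.norm_eq_abs, abs_of_nonneg hr] at h1
  exact (norm_nonneg _).trans h1

lemma maxMod_mono {f : ℂ → ℂ} (hf : Differentiable ℂ f) {r R : ℝ} (h0 : 0 ≤ r) (h : r ≤ R) :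
    maxMod f r ≤ maxMod f R := by
  apply Real.sSup_le
  · rintro x ⟨w, hw, rfl⟩
    have : ‖w‖ = r := by simpa [Complex.dist_eq] using hw
    exact norm_le_maxMod hf (by rw [this]; exact h)
  · exact maxMod_nonneg hf.continuous (h0.trans h)

lemma deriv_le_maxMod {f : ℂ → ℂ} (hf : Differentiable ℂ f) (z : ℂ) :
    ‖deriv f z‖ ≤ maxMod f (‖z‖ + 1) := by
  have h := Complex.norm_deriv_le_of_forall_mem_sphere_norm_le (c := z) (R := 1)
      (C := maxMod f (‖z‖ + 1)) one_pos hf.diffContOnCl ?_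
  · simpa using h
  · intro w hw
    have hw' : ‖w - z‖ = 1 := by simpa [Complex.dist_eq] using hw
    apply norm_le_maxMod hf
    calc ‖w‖ = ‖z + (w - z)‖ := by ring_nf
      _ ≤ ‖z‖ + ‖w - z‖ := norm_add_le _ _
      _ = ‖z‖ + 1 := by rw [hw']

lemma deriv_entire {f : ℂ → ℂ} (hf : Differentiable ℂ f) : Differentiable ℂ (deriv f) :=
  (contDiff_infty_iff_deriv.mp (hf.contDiff : ContDiff ℂ (⊤ : ℕ∞) f)).2.differentiable (by simp)

lemma deriv2_le_maxMod {f : ℂ → ℂ} (hf : Differentiable ℂ f) (z : ℂ) :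
    ‖deriv (deriv f) z‖ ≤ maxMod f (‖z‖ + 2) := by
  have hf' := deriv_entire hf
  have h := Complex.norm_deriv_le_of_forall_mem_sphere_norm_le (c := z) (R := 1)
      (C := maxMod f (‖z‖ + 2)) one_pos hf'.diffContOnCl ?_
  · simpa using h
  · intro w hw
    have hw' : ‖w - z‖ = 1 := by simpa [Complex.dist_eq] using hw
    have h1 : ‖w‖ ≤ ‖z‖ + 1 := by
      calc ‖w‖ = ‖z + (w - z)‖ := by ring_nf
        _ ≤ ‖z‖ + ‖w - z‖ := norm_add_le _ _
        _ = ‖z‖ + 1 := by rw [hw']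
    calc ‖deriv f w‖ ≤ maxMod f (‖w‖ + 1) := deriv_le_maxMod hf w
      _ ≤ maxMod f (‖z‖ + 2) := by
          apply maxMod_mono hf (by positivity); linarith

/-- Solve `u' = (a + b e^z) u`. -/
lemma ode_exp (u : ℂ → ℂ) (hu : Differentiable ℂ u) (a b : ℂ)
    (h : ∀ z, deriv u z = (a + b * Complex.exp z) * u z) (z : ℂ) :
    u z = u 0 * Complex.exp (a * z + b * Complex.exp z - b) := by
  set A : ℂ → ℂ := fun z => a * z + b * Complex.exp z with hA
  have hA' : ∀ z, HasDerivAt A (a + b * Complex.exp z) z := by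
    intro z
    have h1 : HasDerivAt (fun z : ℂ => a * z) a z := by
      simpa using (hasDerivAt_id z).const_mul a
    have h2 : HasDerivAt (fun z : ℂ => b * Complex.exp z) (b * Complex.exp z) z := by
      simpa using (Complex.hasDerivAt_exp z).const_mul b
    exact h1.add h2
  set ψ : ℂ → ℂ := fun z => u z * Complex.exp (-(A z)) with hψdef
  have hψ : ∀ w, HasDerivAt ψ 0 w := by
    intro w
    have h1 : HasDerivAt u ((a + b * Complex.exp w) * u w) w := by
      rw [← h w]; exact (hu w).hasDerivAt
    have h2 : HasDerivAt (fun z => Complex.exp (-(A z)))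
        (Complex.exp (-(A w)) * (-(a + b * Complex.exp w))) w := (hA' w).neg.cexp
    have := h1.mul h2
    exact this.congr_deriv (by ring)
  have hc := const_of_hasDerivAt_zero ψ hψ z
  have hexp : Complex.exp (-(A z)) * Complex.exp (A z) = 1 := by
    rw [← Complex.exp_add]; simp
  have hA0 : A 0 = b := by simp [hA]
  have : u z * Complex.exp (-(A z)) = u 0 * Complex.exp (-b) := by
    simpa [hψdef, hA0] using hc
  have := congrArg (· * Complex.exp (A z)) this
  simp only [mul_assoc, hexp, mul_one] at this
  rw [this, ← Complex.exp_add]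
  simp only [hA]
  ring_nf

/-- Solve `u' = u + c e^z`. -/
lemma ode_res (u : ℂ → ℂ) (hu : Differentiable ℂ u) (c : ℂ)
    (h : ∀ z, deriv u z = u z + c * Complex.exp z) (z : ℂ) :
    u z = (u 0 + c * z) * Complex.exp z := by
  set ψ : ℂ → ℂ := fun z => u z * Complex.exp (-z) - c * z with hψdef
  have hψ : ∀ w, HasDerivAt ψ 0 w := by
    intro w
    have h1 : HasDerivAt u (u w + c * Complex.exp w) w := by
      rw [← h w]; exact (hu w).hasDerivAt
    have h2 : HasDerivAt (fun z : ℂ => Complex.exp (-z))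
        (Complex.exp (-w) * (-1)) w := ((hasDerivAt_id w).neg).cexp
    have h3 : HasDerivAt (fun z : ℂ => c * z) c w := by
      simpa using (hasDerivAt_id w).const_mul c
    have h4 := (h1.mul h2).sub h3
    have hexp : Complex.exp w * Complex.exp (-w) = 1 := by
      rw [← Complex.exp_add]; simp
    exact h4.congr_deriv (by linear_combination c * hexp)
  have hc := const_of_hasDerivAt_zero ψ hψ z
  have hexp : Complex.exp (-z) * Complex.exp z = 1 := by
    rw [← Complex.exp_add]; simp
  have h5 : u z * Complex.exp (-z) - c * z = u 0 := by simpa [hψdef] using hc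
  have h6 : u z * Complex.exp (-z) = u 0 + c * z := by linear_combination h5
  have := congrArg (· * Complex.exp z) h6
  simp only [mul_assoc, hexp, mul_one] at this
  exact this

lemma hasDerivAt_affine_exp (a b z : ℂ) :
    HasDerivAt (fun z => (a + b * z) * Complex.exp z) ((a + b + b * z) * Complex.exp z) z := by
  have h1 : HasDerivAt (fun z : ℂ => a + b * z) b z := by
    simpa using ((hasDerivAt_id z).const_mul b).const_add a
  have := h1.mul (Complex.hasDerivAt_exp z)
  exact this.congr_deriv (by ring)

lemma deriv_affine_exp (a b : ℂ) :
    deriv (fun z => (a + b * z) * Complex.exp z) = fun z => (a + b + b * z) * Complex.exp z :=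
  funext fun z => (hasDerivAt_affine_exp a b z).deriv

/-- The order of growth `ρ(f) = limsup_{r→∞} log log M(r,f) / log r`, as an extended real. -/
noncomputable def growthOrder (f : ℂ → ℂ) : EReal :=
  Filter.limsup (fun r : ℝ => ((Real.log (Real.log (maxMod f r)) / Real.log r : ℝ) : EReal))
    Filter.atTop

/-- `limsup_{r→∞} log M(r,f) / r`, used to express "mean type". -/
noncomputable def typeLimsup (f : ℂ → ℂ) : EReal :=
  Filter.limsup (fun r : ℝ => ((Real.log (maxMod f r) / r : ℝ) : EReal)) Filter.atTop

/-- A finite order entire function `f` solves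
`f‴ − (3+e^z)f″ + (3+2e^z)f′ − (1+e^z)f = 0` iff `f(z) = (c₁ + c₂z)e^z` for some constants
`c₁, c₂ ∈ ℂ`. -/
theorem stmt13 (f : ℂ → ℂ) (hf : Differentiable ℂ f) (hord : growthOrder f < ⊤) :
    (∀ z : ℂ, iteratedDeriv 3 f z - (3 + Complex.exp z) * iteratedDeriv 2 f z
        + (3 + 2 * Complex.exp z) * deriv f z - (1 + Complex.exp z) * f z = 0) ↔
    ∃ c₁ c₂ : ℂ, ∀ z : ℂ, f z = (c₁ + c₂ * z) * Complex.exp z := by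
  constructor
  · intro hode
    -- set up derivatives
    have hf1 : Differentiable ℂ (deriv f) := deriv_entire hf
    have hf2 : Differentiable ℂ (deriv (deriv f)) := deriv_entire hf1
    have hit2 : iteratedDeriv 2 f = deriv (deriv f) := by
      rw [show (2:ℕ) = 1 + 1 from rfl, iteratedDeriv_succ, iteratedDeriv_one]
    have hit3 : iteratedDeriv 3 f = deriv (deriv (deriv f)) := by
      rw [show (3:ℕ) = 2 + 1 from rfl, iteratedDeriv_succ, hit2]
    rw [hit2, hit3] at hode  -- hopefully rewrites
    set h : ℂ → ℂ := fun z => deriv (deriv f) z - 2 * deriv f z + f z with hh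
    have hhd : Differentiable ℂ h := (hf2.sub (hf1.const_mul 2)).add hf
    have hderivh : ∀ z, deriv h z = (1 + Complex.exp z) * h z := by
      intro z
      have H : HasDerivAt h (deriv (deriv (deriv f)) z - 2 * deriv (deriv f) z + deriv f z) z := by
        exact (((hf2 z).hasDerivAt.sub (((hf1 z).hasDerivAt).const_mul 2)).add
          (hf z).hasDerivAt)
      rw [H.deriv]
      have := hode z
      simp only [hh]
      linear_combination this
    have hsol := ode_exp h hhd 1 1 (by simpa using hderivh)
    -- case on h 0
    by_cases hC : h 0 = 0
    · -- h ≡ 0, solve the reduced equation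
      have hzero : ∀ z, h z = 0 := by
        intro z; rw [hsol z, hC, zero_mul]
      set g : ℂ → ℂ := fun z => deriv f z - f z with hg
      have hgd : Differentiable ℂ g := hf1.sub hf
      have hderivg : ∀ z, deriv g z = (1 + 0 * Complex.exp z) * g z := by
        intro z
        have H : HasDerivAt g (deriv (deriv f) z - deriv f z) z :=
          (hf1 z).hasDerivAt.sub (hf z).hasDerivAt
        rw [H.deriv]
        have := hzero z
        simp only [hh] at this
        simp only [hg]
        linear_combination this
      have hgsol := ode_exp g hgd 1 0 hderivg
      have hfd : ∀ z, deriv f z = f z + g 0 * Complex.exp z := by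
        intro z
        have := hgsol z
        simp only [hg] at this ⊢
        rw [show (1:ℂ) * z + 0 * Complex.exp z - 0 = z by ring] at this
        linear_combination this
      have hfsol := ode_res f hf (g 0) hfd
      exact ⟨f 0, g 0, fun z => by rw [hfsol z]⟩
    · -- contradiction with finite order
      exfalso
      set C : ℝ := ‖h 0‖ with hCdef
      have hCpos : 0 < C := norm_pos_iff.mpr hC
      have key : ∀ x : ℝ, 0 ≤ x →
          (C / 4) * Real.exp (x + Real.exp x - 1) ≤ maxMod f (x + 2) := by
        intro x hx
        have habs : ‖(x : ℂ)‖ = x := by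
          simp [Complex.norm_real, abs_of_nonneg hx]
        have hval : ‖h (x : ℂ)‖ = C * Real.exp (x + Real.exp x - 1) := by
          rw [hsol (x : ℂ), norm_mul, Complex.norm_exp]
          congr 1
          simp [Complex.add_re, Complex.sub_re, Complex.mul_re, ← Complex.ofReal_exp]
        have e2 : ‖deriv (deriv f) (x : ℂ)‖ ≤ maxMod f (x + 2) := by
          have := deriv2_le_maxMod hf (x : ℂ); rwa [habs] at this
        have e1 : ‖deriv f (x : ℂ)‖ ≤ maxMod f (x + 2) := by
          have := deriv_le_maxMod hf (x : ℂ); rw [habs] at this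
          exact this.trans (maxMod_mono hf (by linarith) (by linarith))
        have e0 : ‖f (x : ℂ)‖ ≤ maxMod f (x + 2) := by
          have := maxMod_ge hf.continuous (z := (x : ℂ)); rw [habs] at this
          exact this.trans (maxMod_mono hf hx (by linarith))
        have hup : ‖h (x : ℂ)‖ ≤ 4 * maxMod f (x + 2) := by
          have t1 := norm_add_le (deriv (deriv f) (x:ℂ) - 2 * deriv f (x:ℂ)) (f (x:ℂ))
          have t2 := norm_sub_le (deriv (deriv f) (x:ℂ)) (2 * deriv f (x:ℂ))
          have t3 : ‖(2:ℂ) * deriv f (x:ℂ)‖ = 2 * ‖deriv f (x:ℂ)‖ := by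
            rw [norm_mul]; norm_num
          simp only [hh]
          rw [t3] at t2
          linarith
        rw [hval] at hup
        linarith
      -- get a real bound from finite order
      obtain ⟨K, hK1, -⟩ := EReal.lt_iff_exists_real_btwn.mp hord
      have hev : ∀ᶠ r in atTop,
          ((Real.log (Real.log (maxMod f r)) / Real.log r : ℝ) : EReal) < (K : EReal) :=
        Filter.eventually_lt_of_limsup_lt hK1
      have hlogK : ∀ᶠ r in atTop, K * Real.log r ≤ r - 2 := by
        have hc : (0:ℝ) < 1 / (2 * (|K| + 1)) := by positivity
        have hA : |K| / (2 * (|K| + 1)) ≤ 1 / 2 := by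
          rw [div_le_div_iff₀ (by positivity) (by norm_num)]
          nlinarith [abs_nonneg K]
        filter_upwards [Real.isLittleO_log_id_atTop.bound hc,
          eventually_ge_atTop (4 : ℝ)] with r h1 h2
        have h1' : |Real.log r| ≤ 1 / (2 * (|K| + 1)) * r := by
          simpa [Real.norm_eq_abs, abs_of_nonneg (by linarith : (0:ℝ) ≤ r)] using h1
        calc K * Real.log r ≤ |K| * |Real.log r| := by
              rw [← abs_mul]; exact le_abs_self _
          _ ≤ |K| * (1 / (2 * (|K| + 1)) * r) :=
              mul_le_mul_of_nonneg_left h1' (abs_nonneg K)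
          _ = (|K| / (2 * (|K| + 1))) * r := by ring
          _ ≤ (1/2) * r := mul_le_mul_of_nonneg_right hA (by linarith)
          _ ≤ r - 2 := by linarith
      have hbig : ∀ᶠ r in atTop, K ≤ Real.log (Real.log (maxMod f r)) / Real.log r := by
        filter_upwards [hlogK, eventually_ge_atTop (3 + |Real.log (C/4)|),
          eventually_ge_atTop (2 : ℝ)] with r h1 h2 h3
        have hx0 : 0 ≤ r - 2 := by linarith
        have hM : (C / 4) * Real.exp ((r - 2) + Real.exp (r - 2) - 1) ≤ maxMod f r := by
          have := key (r - 2) hx0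
          rwa [show r - 2 + 2 = r by ring] at this
        have hpos : 0 < (C / 4) * Real.exp ((r - 2) + Real.exp (r - 2) - 1) := by positivity
        have heq : Real.log ((C / 4) * Real.exp ((r - 2) + Real.exp (r - 2) - 1))
            = Real.log (C / 4) + ((r - 2) + Real.exp (r - 2) - 1) := by
          rw [Real.log_mul (by positivity) (Real.exp_pos _).ne', Real.log_exp]
        have hlog1 : Real.log (C / 4) + ((r - 2) + Real.exp (r - 2) - 1)
            ≤ Real.log (maxMod f r) := by
          rw [← heq]; exact Real.log_le_log hpos hM
        have hlog2 : Real.exp (r - 2) ≤ Real.log (maxMod f r) := by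
          have hne := neg_abs_le (Real.log (C / 4))
          linarith
        have hlog3 : r - 2 ≤ Real.log (Real.log (maxMod f r)) := by
          have := Real.log_le_log (Real.exp_pos (r - 2)) hlog2
          rwa [Real.log_exp] at this
        have hlr : 0 < Real.log r := Real.log_pos (by linarith)
        rw [le_div_iff₀ hlr]
        linarith
      obtain ⟨r, hr1, hr2⟩ := (hev.and hbig).exists
      rw [EReal.coe_lt_coe_iff] at hr1
      linarith
  · rintro ⟨c₁, c₂, hc⟩
    have hfe : f = fun z => (c₁ + c₂ * z) * Complex.exp z := funext hc
    intro z
    rw [hfe]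
    have hit2 : iteratedDeriv 2 (fun z => (c₁ + c₂ * z) * Complex.exp z)
        = fun z => (c₁ + 2 * c₂ + c₂ * z) * Complex.exp z := by
      rw [show (2:ℕ) = 1 + 1 from rfl, iteratedDeriv_succ, iteratedDeriv_one,
        deriv_affine_exp, deriv_affine_exp]
      funext w; ring_nf
    have hit3 : iteratedDeriv 3 (fun z => (c₁ + c₂ * z) * Complex.exp z)
        = fun z => (c₁ + 3 * c₂ + c₂ * z) * Complex.exp z := by
      rw [show (3:ℕ) = 2 + 1 from rfl, iteratedDeriv_succ, hit2, deriv_affine_exp]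
      funext w; ring_nf
    rw [hit2, hit3, deriv_affine_exp]
    ring
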